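/- Let H be a complex Hilbert space, I an index set, and (v_i)_{i∈I}, (w_i)_{i∈I} two families in H with ⟨v_i, w_j⟩ = δ_{ij} for all i, j ∈ I. Let A, B ⊆ I be disjoint subsets. If there exist vectors f, g ∈ H such that ⟨f, v_i⟩ = 0 for all i ∈ A, ⟨g, w_i⟩ = 0 for all i ∈ B, and ⟨f, g⟩ ≠ 0, then the closed linear span of {v_i : i ∈ A} ∪ {w_i : i ∈ B} is a proper subspace of H (i.e., the mixed system is incomplete). -/

import Mathlib

open scoped ComplexInnerProductSpace Classical

lemma mem_orthogonal_span_closure {H : Type*} [NormedAddCommGroup H]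
    [InnerProductSpace ℂ H] [CompleteSpace H] (S : Set H) (x : H)
    (hx : ∀ s ∈ S, ⟪s, x⟫ = (0 : ℂ)) :
    x ∈ ((Submodule.span ℂ S).topologicalClosure)ᗮ := by
  have h1 : x ∈ (Submodule.span ℂ S)ᗮ := by
    rw [Submodule.mem_orthogonal]
    intro u hu
    induction hu using Submodule.span_induction with
    | mem s hs => exact hx s hs
    | zero => simp
    | add a b _ _ ha hb => rw [inner_add_left, ha, hb, add_zero]
    | smul c a _ ha => rw [inner_smul_left, ha, mul_zero]
  rwa [← Submodule.orthogonal_orthogonal_eq_closure,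
    Submodule.triorthogonal_eq_orthogonal]

/-- If `(v_i)` and `(w_i)` are biorthogonal families in a complex Hilbert space `H`,
`A, B` are disjoint index sets, and there exist `f ⊥ {v_i : i ∈ A}`, `g ⊥ {w_i : i ∈ B}`
with `⟨f, g⟩ ≠ 0`, then the mixed system `{v_i : i ∈ A} ∪ {w_i : i ∈ B}` is incomplete,
i.e. its closed linear span is a proper subspace of `H`. -/
theorem stmt0 {H : Type*} [NormedAddCommGroup H] [InnerProductSpace ℂ H] [CompleteSpace H]
    {ι : Type*} (v w : ι → H)
    (hbi : ∀ i j : ι, ⟪v i, w j⟫ = if i = j then (1 : ℂ) else 0)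
    (A B : Set ι) (hAB : Disjoint A B)
    (f g : H)
    (hf : ∀ i ∈ A, ⟪f, v i⟫ = (0 : ℂ))
    (hg : ∀ i ∈ B, ⟪g, w i⟫ = (0 : ℂ))
    (hfg : ⟪f, g⟫ ≠ (0 : ℂ)) :
    (Submodule.span ℂ (v '' A ∪ w '' B)).topologicalClosure ≠ ⊤ := by
  set K : Submodule ℂ H := (Submodule.span ℂ (w '' B)).topologicalClosure with hK
  haveI : Submodule.HasOrthogonalProjection K := by
    haveI : CompleteSpace K :=
      (Submodule.isClosed_topologicalClosure _).completeSpace_coe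
    infer_instance
  set h : H := f - (Submodule.orthogonalProjectionOnto K f : H) with hh
  -- g ∈ Kᗮ
  have hgK : g ∈ Kᗮ := by
    apply mem_orthogonal_span_closure
    rintro s ⟨j, hjB, rfl⟩
    rw [inner_eq_zero_symm]
    exact hg j hjB
  -- each v i (i ∈ A) is in Kᗮ
  have hvK : ∀ i ∈ A, v i ∈ Kᗮ := by
    intro i hiA
    apply mem_orthogonal_span_closure
    rintro s ⟨j, hjB, rfl⟩
    rw [inner_eq_zero_symm, hbi i j, if_neg]
    exact fun hij => (hAB.ne_of_mem hiA hjB) hij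
  have hsub : f - (Submodule.orthogonalProjectionOnto K f : H) ∈ Kᗮ :=
    Submodule.sub_starProjection_mem_orthogonal (K := K) f
  have hPf : (Submodule.orthogonalProjectionOnto K f : H) ∈ K := Submodule.coe_mem _
  -- h is orthogonal to all generators
  have hgen : ∀ s ∈ (v '' A ∪ w '' B), ⟪s, h⟫ = (0 : ℂ) := by
    rintro s (⟨i, hiA, rfl⟩ | ⟨j, hjB, rfl⟩)
    · rw [hh, inner_sub_right]
      have h1 : ⟪v i, f⟫ = (0 : ℂ) := by
        rw [inner_eq_zero_symm]; exact hf i hiA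
      have h2 : ⟪v i, (Submodule.orthogonalProjectionOnto K f : H)⟫ = (0 : ℂ) :=
        Submodule.inner_left_of_mem_orthogonal hPf (hvK i hiA)
      rw [h1, h2, sub_zero]
    · have hwK : w j ∈ K :=
        (Submodule.span ℂ (w '' B)).le_topologicalClosure
          (Submodule.subset_span ⟨j, hjB, rfl⟩)
      exact Submodule.inner_right_of_mem_orthogonal hwK hsub
  -- h ≠ 0 since ⟪h, g⟫ = ⟪f, g⟫ ≠ 0
  have hne : h ≠ 0 := by
    intro h0
    apply hfg
    have : ⟪h, g⟫ = ⟪f, g⟫ := by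
      rw [hh, inner_sub_left,
        Submodule.inner_right_of_mem_orthogonal hPf hgK, sub_zero]
    rw [← this, h0, inner_zero_left]
  -- conclude
  rw [Ne, Submodule.topologicalClosure_eq_top_iff]
  intro hbot
  apply hne
  have hmem : h ∈ (Submodule.span ℂ (v '' A ∪ w '' B))ᗮ := by
    rw [Submodule.mem_orthogonal]
    intro u hu
    induction hu using Submodule.span_induction with
    | mem s hs => exact hgen s hs
    | zero => simp
    | add a b _ _ ha hb => rw [inner_add_left, ha, hb, add_zero]
    | smul c a _ ha => rw [inner_smul_left, ha, mul_zero]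
  rw [hbot] at hmem
  exact hmem
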